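/- Let (ξ_l)_{l≥0} be a sequence of independent, integrable real-valued random variables on a probability space. Suppose there are real numbers (a_l)_{l≥0} and a real number a such that E[ξ_0] = a_0, E[ξ_l] = a_l − a_{l−1} for every l ≥ 1, and a_l → a as l → ∞, and suppose there exist constants C < ∞ and β > 0 such that E[ξ_l²] ≤ C · 2^{−2βl} and (a_l − a)² ≤ C · 2^{−2βl} for every l ≥ 0. Then there exists a probability mass function p on ℕ with p(l) > 0 for all l, with tail function P̄(l) = Σ_{k≥l} p(k), such that for any ℕ-valued random variable L with law p independent of (ξ_l), the independent-sum estimator Z := Σ_{l=0}^{L} ξ_l / P̄(l) is square-integrable with E[Z] = a; that is, Z is an unbiased, finite-variance estimator of a. -/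

import Mathlib

open MeasureTheory ProbabilityTheory Filter
open scoped ENNReal NNReal

private lemma aux_eLpNorm_two_le {Ω : Type*} [MeasurableSpace Ω] (P : Measure Ω)
    [IsProbabilityMeasure P] (f : Ω → ℝ) (hf : MemLp f 2 P) (M : ℝ)
    (h : ∫ ω, f ω ^ 2 ∂P ≤ M) : eLpNorm f 2 P ≤ ENNReal.ofReal (Real.sqrt M) := by
  have h1 : eLpNorm f 2 P = (∫⁻ ω, ENNReal.ofReal (f ω ^ 2) ∂P) ^ (1/2 : ℝ) := by
    rw [eLpNorm_eq_lintegral_rpow_enorm_toReal two_ne_zero ENNReal.ofNat_ne_top]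
    norm_num
    congr 1
    exact lintegral_congr fun ω => by
      rw [Real.enorm_eq_ofReal_abs, ← ENNReal.ofReal_pow (abs_nonneg _), sq_abs]
  have h2 : (∫⁻ ω, ENNReal.ofReal (f ω ^ 2) ∂P) = ENNReal.ofReal (∫ ω, f ω ^ 2 ∂P) := by
    rw [ofReal_integral_eq_lintegral_ofReal hf.integrable_sq
      (Filter.Eventually.of_forall fun ω => sq_nonneg _)]
  rw [h1, h2, Real.sqrt_eq_rpow]
  have hM : 0 ≤ M := le_trans (integral_nonneg fun ω => sq_nonneg _) h
  rw [← ENNReal.ofReal_rpow_of_nonneg hM (by norm_num)]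
  exact ENNReal.rpow_le_rpow (ENNReal.ofReal_le_ofReal h) (by norm_num)

private lemma aux_tsum_eq (q C : ℝ) (hq0 : 0 < q) (hq1 : q < 1)
    (μf : ℕ → ℝ) (a : ℕ → ℝ) (alim : ℝ)
    (h0 : μf 0 = a 0) (hi : ∀ l : ℕ, 1 ≤ l → μf l = a l - a (l - 1))
    (halim : Tendsto a atTop (nhds alim))
    (hb : ∀ l : ℕ, |a l - alim| ≤ Real.sqrt C * (q ^ l) ^ 2) :
    ∑' l, μf l = alim := by
  set w : ℝ := q ^ 2 with hw_def
  have hw0 : 0 < w := by positivity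
  have hw1 : w < 1 := by nlinarith
  set K : ℝ := |a 0| + Real.sqrt C * (1 + w⁻¹) with hK_def
  have hK0 : 0 ≤ Real.sqrt C * (1 + w⁻¹) := by positivity
  have hbw : ∀ l : ℕ, |a l - alim| ≤ Real.sqrt C * w ^ l := by
    intro l
    have : (q ^ l) ^ 2 = w ^ l := by rw [hw_def, ← pow_mul, ← pow_mul, mul_comm]
    rw [← this]; exact hb l
  have hbound : ∀ l : ℕ, ‖μf l‖ ≤ K * w ^ l := by
    intro l
    match l with
    | 0 =>
      simp only [pow_zero, mul_one, Real.norm_eq_abs, h0]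
      rw [hK_def]
      linarith
    | (n+1) =>
      have h1 : μf (n+1) = a (n+1) - a n := by
        rw [hi (n+1) (by omega)]; simp
      have h2 := hbw (n+1)
      have h3 := hbw n
      have h4 : |a (n+1) - a n| ≤ Real.sqrt C * w ^ (n+1) + Real.sqrt C * w ^ n := by
        calc |a (n+1) - a n| = |(a (n+1) - alim) + (alim - a n)| := by ring_nf
          _ ≤ |a (n+1) - alim| + |alim - a n| := abs_add_le _ _
          _ ≤ Real.sqrt C * w ^ (n+1) + Real.sqrt C * w ^ n := by
              rw [abs_sub_comm alim (a n)]; linarith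
      rw [Real.norm_eq_abs, h1]
      have h5 : Real.sqrt C * w ^ (n+1) + Real.sqrt C * w ^ n ≤ K * w ^ (n+1) := by
        have hwn : 0 < w ^ n := by positivity
        have hinv : w⁻¹ * w = 1 := inv_mul_cancel₀ (ne_of_gt hw0)
        have habs : 0 ≤ |a 0| := abs_nonneg _
        have hsC : 0 ≤ Real.sqrt C := Real.sqrt_nonneg _
        rw [hK_def]
        have : (|a 0| + Real.sqrt C * (1 + w⁻¹)) * w ^ (n+1)
            = |a 0| * w ^ (n+1) + Real.sqrt C * w ^ (n+1)
              + Real.sqrt C * (w⁻¹ * w) * w ^ n := by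
          ring
        rw [this, hinv]
        have h6 : 0 ≤ |a 0| * w ^ (n+1) := by positivity
        linarith
      linarith
  have hsummable : Summable μf :=
    Summable.of_norm_bounded (Summable.mul_left K
      (summable_geometric_of_lt_one hw0.le hw1)) hbound
  have hpartial : ∀ n : ℕ, ∑ l ∈ Finset.range (n+1), μf l = a n := by
    intro n
    induction n with
    | zero => simpa using h0
    | succ n ih =>
      rw [Finset.sum_range_succ, ih, hi (n+1) (by omega)]
      simp
  have h1 : Tendsto (fun n => ∑ l ∈ Finset.range n, μf l) atTop (nhds (∑' l, μf l)) :=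
    hsummable.hasSum.tendsto_sum_nat
  have h2 : Tendsto (fun n => ∑ l ∈ Finset.range (n+1), μf l) atTop (nhds alim) := by
    have he : (fun n => ∑ l ∈ Finset.range (n+1), μf l) = a := funext hpartial
    rw [he]; exact halim
  exact tendsto_nhds_unique h1 ((tendsto_add_atTop_iff_nat 1).mp h2)

private lemma aux_measure_Ici {Ω : Type*} [MeasurableSpace Ω] (P : Measure Ω)
    [IsProbabilityMeasure P]
    (L : Ω → ℕ) (hL : Measurable L) (q : ℝ) (hq0 : 0 < q) (hq1 : q < 1)
    (hlaw : ∀ l, P {ω | L ω = l} = ENNReal.ofReal ((1-q) * q ^ l)) :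
    ∀ l : ℕ, P (L ⁻¹' Set.Ici l) = ENNReal.ofReal (q ^ l) := by
  intro l
  have hql1 : q ^ l ≤ 1 := pow_le_one₀ hq0.le hq1.le
  have hcompl : (L ⁻¹' Set.Ici l)ᶜ = ⋃ n ∈ Finset.range l, {ω | L ω = n} := by
    ext ω
    simp only [Set.mem_compl_iff, Set.mem_preimage, Set.mem_Ici, not_le, Set.mem_iUnion,
      Finset.mem_range, Set.mem_setOf_eq, exists_prop]
    exact ⟨fun h => ⟨L ω, h, rfl⟩, fun ⟨n, hn, he⟩ => he ▸ hn⟩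
  have hdisj : (↑(Finset.range l) : Set ℕ).PairwiseDisjoint (fun n => {ω | L ω = n}) := by
    intro m _ n _ hmn
    refine Set.disjoint_left.2 fun ω h1 h2 => hmn ?_
    rw [← h1, ← h2]
  have hPc : P ((L ⁻¹' Set.Ici l)ᶜ) = ENNReal.ofReal (1 - q ^ l) := by
    rw [hcompl, measure_biUnion_finset hdisj (fun n _ => hL (measurableSet_singleton n))]
    simp_rw [hlaw]
    rw [← ENNReal.ofReal_sum_of_nonneg (fun n _ => mul_nonneg (by linarith) (by positivity))]
    congr 1
    rw [← Finset.mul_sum, geom_sum_eq (ne_of_lt hq1) l]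
    have hne : q - 1 ≠ 0 := by linarith
    have hmc := div_mul_cancel₀ (q ^ l - 1) hne
    linear_combination -hmc
  have h1 := prob_compl_eq_one_sub (μ := P) ((hL (measurableSet_Ici (a := l))).compl)
  rw [compl_compl, hPc] at h1
  rw [h1, show (1:ℝ≥0∞) = ENNReal.ofReal 1 by simp,
    ← ENNReal.ofReal_sub 1 (by linarith : (0:ℝ) ≤ 1 - q ^ l)]
  congr 1
  ring

private lemma aux_integral_indicator {Ω : Type*} [MeasurableSpace Ω] (P : Measure Ω)
    [IsProbabilityMeasure P]
    (ξ : ℕ → Ω → ℝ) (hξmeas : ∀ l, Measurable (ξ l))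
    (L : Ω → ℕ) (hL : Measurable L) (q : ℝ) (hq0 : 0 < q)
    (hindep : IndepFun L (fun ω => fun l => ξ l ω) P)
    (hPA : ∀ l : ℕ, P (L ⁻¹' Set.Ici l) = ENNReal.ofReal (q ^ l)) :
    ∀ l : ℕ, ∫ ω, (L ⁻¹' Set.Ici l).indicator (fun ω => ξ l ω / q ^ l) ω ∂P
      = ∫ ω, ξ l ω ∂P := by
  intro l
  have hqlne : q ^ l ≠ 0 := ne_of_gt (pow_pos hq0 l)
  set X : Ω → ℝ := fun ω => (L ⁻¹' Set.Ici l).indicator (fun _ => (1:ℝ)) ω with hX_def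
  set Y : Ω → ℝ := fun ω => ξ l ω / q ^ l with hY_def
  have hXeq : (fun ω => (L ⁻¹' Set.Ici l).indicator (fun ω => ξ l ω / q ^ l) ω) = X * Y := by
    funext ω
    by_cases hω : ω ∈ L ⁻¹' Set.Ici l <;>
      simp [hX_def, hY_def, hω, Set.indicator_of_mem, Set.indicator_of_notMem]
  have hXY : IndepFun X Y P := by
    have h1 : Measurable (fun n : ℕ => if l ≤ n then (1:ℝ) else 0) :=
      measurable_from_top
    have h2 : Measurable (fun v : ℕ → ℝ => v l / q ^ l) := (measurable_pi_apply l).div_const _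
    have h3 := hindep.comp h1 h2
    have e1 : X = (fun n : ℕ => if l ≤ n then (1:ℝ) else 0) ∘ L := by
      funext ω
      rw [hX_def]
      by_cases hω : l ≤ L ω <;>
        simp [Set.indicator_apply, Set.mem_preimage, Set.mem_Ici, hω]
    have e2 : Y = (fun v : ℕ → ℝ => v l / q ^ l) ∘ (fun ω => fun l => ξ l ω) := rfl
    rw [e1, e2]; exact h3
  have hXm : AEStronglyMeasurable X P :=
    (measurable_const.indicator (hL measurableSet_Ici)).aestronglyMeasurable
  have hYm : AEStronglyMeasurable Y P := ((hξmeas l).div_const _).aestronglyMeasurable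
  rw [hXeq, hXY.integral_mul_eq_mul_integral hXm hYm]
  have hintX : ∫ ω, X ω ∂P = q ^ l := by
    rw [hX_def]
    rw [integral_indicator_const (1:ℝ) (hL measurableSet_Ici), measureReal_def, hPA l, smul_eq_mul, mul_one,
      ENNReal.toReal_ofReal (by positivity)]
  have hintY : ∫ ω, Y ω ∂P = (∫ ω, ξ l ω ∂P) / q ^ l := by
    rw [hY_def, integral_div]
  rw [show integral P X = ∫ ω, X ω ∂P from rfl, show integral P Y = ∫ ω, Y ω ∂P from rfl,
    hintX, hintY]
  field_simp

private lemma aux_h_bounds {Ω : Type*} [MeasurableSpace Ω] (P : Measure Ω)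
    [IsProbabilityMeasure P]
    (ξ : ℕ → Ω → ℝ) (L : Ω → ℕ) (q C : ℝ) (hq0 : 0 < q) (hq1 : q < 1)
    (h : ℕ → Ω → ℝ)
    (hh_def : h = fun l => (L ⁻¹' Set.Ici l).indicator (fun ω => ξ l ω / q ^ l))
    (hhmeas : ∀ l, Measurable (h l))
    (hξ2bound : ∀ l, eLpNorm (ξ l) 2 P ≤ ENNReal.ofReal (Real.sqrt C * (q ^ l) ^ 2)) :
    (∀ l, eLpNorm (h l) 2 P ≤ ENNReal.ofReal (Real.sqrt C * q ^ l)) ∧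
    (∑' l, ∫⁻ ω, ‖h l ω‖₊ ∂P) ≠ ∞ := by
  have hqlpos : ∀ l : ℕ, (0:ℝ) < q ^ l := fun l => pow_pos hq0 l
  have hhbound : ∀ l, eLpNorm (h l) 2 P ≤ ENNReal.ofReal (Real.sqrt C * q ^ l) := by
    intro l
    rw [hh_def]
    refine le_trans (eLpNorm_indicator_le _) ?_
    have he : (fun ω => ξ l ω / q ^ l) = (q ^ l)⁻¹ • ξ l := by
      funext ω
      simp only [Pi.smul_apply, smul_eq_mul]
      field_simp
    rw [he, eLpNorm_const_smul]
    have h1 : ((‖(q ^ l)⁻¹‖₊ : ℝ≥0) : ℝ≥0∞) = ENNReal.ofReal ((q ^ l)⁻¹) :=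
      Real.enorm_eq_ofReal (by positivity)
    calc (‖(q ^ l)⁻¹‖₊ : ℝ≥0) • eLpNorm (ξ l) 2 P
        = ENNReal.ofReal ((q ^ l)⁻¹) * eLpNorm (ξ l) 2 P := by
          rw [← h1]; rfl
      _ ≤ ENNReal.ofReal ((q ^ l)⁻¹) * ENNReal.ofReal (Real.sqrt C * (q ^ l) ^ 2) :=
          mul_le_mul_right (hξ2bound l) _
      _ = ENNReal.ofReal ((q ^ l)⁻¹ * (Real.sqrt C * (q ^ l) ^ 2)) :=
          (ENNReal.ofReal_mul (by positivity)).symm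
      _ = ENNReal.ofReal (Real.sqrt C * q ^ l) := by
          congr 1
          have : q ^ l ≠ 0 := ne_of_gt (hqlpos l)
          field_simp
  refine ⟨hhbound, ?_⟩
  have hb : ∀ l, ∫⁻ ω, ‖h l ω‖₊ ∂P ≤ ENNReal.ofReal (Real.sqrt C * q ^ l) := by
    intro l
    rw [show (∫⁻ ω, (‖h l ω‖₊ : ℝ≥0∞) ∂P) = eLpNorm (h l) 1 P from
      by rw [eLpNorm_one_eq_lintegral_enorm]; rfl]
    exact le_trans (eLpNorm_le_eLpNorm_of_exponent_le (by norm_num)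
      (hhmeas l).aestronglyMeasurable) (hhbound l)
  have hgeo : Summable (fun l : ℕ => Real.sqrt C * q ^ l) :=
    (summable_geometric_of_lt_one hq0.le hq1).mul_left _
  refine ne_top_of_le_ne_top ?_ (ENNReal.tsum_le_tsum hb)
  rw [← ENNReal.ofReal_tsum_of_nonneg (fun l => by positivity) hgeo]
  exact ENNReal.ofReal_ne_top

private lemma aux_memLp {Ω : Type*} [MeasurableSpace Ω] (P : Measure Ω) [IsProbabilityMeasure P]
    (ξ : ℕ → Ω → ℝ)
    (L : Ω → ℕ) (q C : ℝ) (hq0 : 0 < q) (hq1 : q < 1)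
    (h : ℕ → Ω → ℝ)
    (hh_def : h = fun l => (L ⁻¹' Set.Ici l).indicator (fun ω => ξ l ω / q ^ l))
    (hhmeas : ∀ l, Measurable (h l))
    (hhbound : ∀ l, eLpNorm (h l) 2 P ≤ ENNReal.ofReal (Real.sqrt C * q ^ l)) :
    MemLp (fun ω => ∑ l ∈ Finset.range (L ω + 1), ξ l ω / q ^ l) 2 P ∧
    (∀ ω, (∑ l ∈ Finset.range (L ω + 1), ξ l ω / q ^ l) = ∑' l, h l ω) := by
  have hvanish : ∀ ω, ∀ l ∉ Finset.range (L ω + 1), h l ω = 0 := by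
    intro ω l hl
    rw [hh_def]
    apply Set.indicator_of_notMem
    simp only [Set.mem_preimage, Set.mem_Ici, not_le]
    simp only [Finset.mem_range, not_lt] at hl
    omega
  have hZrepr : ∀ ω, (∑ l ∈ Finset.range (L ω + 1), ξ l ω / q ^ l) = ∑' l, h l ω := by
    intro ω
    rw [tsum_eq_sum (hvanish ω)]
    refine Finset.sum_congr rfl fun l hl => ?_
    have hmem : ω ∈ L ⁻¹' Set.Ici l := by
      simp only [Set.mem_preimage, Set.mem_Ici]
      simp only [Finset.mem_range] at hl
      omega
    simp only [hh_def]
    rw [Set.indicator_of_mem hmem]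
  have hZN : ∀ N, Measurable (fun ω => ∑ l ∈ Finset.range N, h l ω) :=
    fun N => Finset.measurable_sum _ (fun l _ => hhmeas l)
  have htendZ : ∀ ω, Tendsto (fun N => ∑ l ∈ Finset.range N, h l ω) atTop
      (nhds (∑ l ∈ Finset.range (L ω + 1), ξ l ω / q ^ l)) := by
    intro ω
    rw [hZrepr ω]
    exact (summable_of_ne_finset_zero (hvanish ω)).hasSum.tendsto_sum_nat
  have haesmZ : AEStronglyMeasurable
      (fun ω => ∑ l ∈ Finset.range (L ω + 1), ξ l ω / q ^ l) P :=
    aestronglyMeasurable_of_tendsto_ae atTop (fun N => (hZN N).aestronglyMeasurable)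
      (Filter.Eventually.of_forall htendZ)
  have hgeo : Summable (fun l : ℕ => Real.sqrt C * q ^ l) :=
    (summable_geometric_of_lt_one hq0.le hq1).mul_left _
  have hBN : ∀ N, eLpNorm (fun ω => ∑ l ∈ Finset.range N, h l ω) 2 P
      ≤ ENNReal.ofReal (Real.sqrt C * (1 - q)⁻¹) := by
    intro N
    have hfe : (fun ω => ∑ l ∈ Finset.range N, h l ω) = ∑ l ∈ Finset.range N, h l := by
      funext ω
      simp [Finset.sum_apply]
    rw [hfe]
    refine le_trans (eLpNorm_sum_le (fun l _ => (hhmeas l).aestronglyMeasurable)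
      (by norm_num)) ?_
    calc ∑ l ∈ Finset.range N, eLpNorm (h l) 2 P
        ≤ ∑ l ∈ Finset.range N, ENNReal.ofReal (Real.sqrt C * q ^ l) :=
          Finset.sum_le_sum fun l _ => hhbound l
      _ = ENNReal.ofReal (∑ l ∈ Finset.range N, Real.sqrt C * q ^ l) :=
          (ENNReal.ofReal_sum_of_nonneg (fun l _ => by positivity)).symm
      _ ≤ ENNReal.ofReal (Real.sqrt C * (1 - q)⁻¹) := by
          apply ENNReal.ofReal_le_ofReal
          have := Summable.sum_le_tsum (Finset.range N)
            (fun l _ => by positivity : ∀ l ∉ Finset.range N, 0 ≤ Real.sqrt C * q ^ l) hgeo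
          rw [tsum_mul_left, tsum_geometric_of_lt_one hq0.le hq1] at this
          exact this
  have hZbound : eLpNorm (fun ω => ∑ l ∈ Finset.range (L ω + 1), ξ l ω / q ^ l) 2 P
      ≤ ENNReal.ofReal (Real.sqrt C * (1 - q)⁻¹) := by
    refine le_trans (Lp.eLpNorm_lim_le_liminf_eLpNorm (fun N => (hZN N).aestronglyMeasurable) _
      (Filter.Eventually.of_forall htendZ)) ?_
    refine le_trans (Filter.liminf_le_liminf (Filter.Eventually.of_forall hBN)) ?_
    simp [Filter.liminf_const]
  exact ⟨⟨haesmZ, lt_of_le_of_lt hZbound ENNReal.ofReal_lt_top⟩, hZrepr⟩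

/-- corollary, independent-sum form: if the independent
increment estimators `ξ_l` are unbiased for the increments `a_l − a_{l−1}` with
`a_l → a`, and second moments and squared biases decay geometrically,
`E[ξ_l²] ≤ C 2^{−2βl}` and `(a_l − a)² ≤ C 2^{−2βl}`, then there is a positive
probability mass function `p` on ℕ with tail function `P̄(l) = ∑_{k≥l} p(k)`
such that for every `L ∼ p` independent of `(ξ_l)` the independent-sum
estimator `∑_{l=0}^L ξ_l / P̄(l)` is square-integrable and unbiased for `a`. -/
theorem exists_pmf_independent_sum_estimator_unbiased
    {Ω : Type*} [MeasurableSpace Ω] (P : Measure Ω) [IsProbabilityMeasure P]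
    (ξ : ℕ → Ω → ℝ) (hξmeas : ∀ l, Measurable (ξ l))
    (hξint : ∀ l, Integrable (ξ l) P)
    (hξindep : iIndepFun ξ P)
    (a : ℕ → ℝ) (alim : ℝ)
    (ha0 : ∫ ω, ξ 0 ω ∂P = a 0)
    (hainc : ∀ l : ℕ, 1 ≤ l → ∫ ω, ξ l ω ∂P = a l - a (l - 1))
    (halim : Tendsto a atTop (nhds alim))
    (hξ2 : ∀ l, MemLp (ξ l) 2 P)
    (C β : ℝ) (hβ : 0 < β)
    (hmom : ∀ l : ℕ, ∫ ω, (ξ l ω) ^ 2 ∂P ≤ C * ((2 : ℝ) ^ (-(2 * β * l))))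
    (hbias : ∀ l : ℕ, (a l - alim) ^ 2 ≤ C * ((2 : ℝ) ^ (-(2 * β * l)))) :
    ∃ p : ℕ → ℝ, (∀ l, 0 < p l) ∧ (∑' l, p l = 1) ∧
      ∀ L : Ω → ℕ, Measurable L →
        (∀ l, P {ω | L ω = l} = ENNReal.ofReal (p l)) →
        IndepFun L (fun ω => fun l => ξ l ω) P →
        MemLp
          (fun ω => ∑ l ∈ Finset.range (L ω + 1), ξ l ω / ∑' k : ℕ, p (l + k))
          2 P ∧
        ∫ ω, (∑ l ∈ Finset.range (L ω + 1), ξ l ω / ∑' k : ℕ, p (l + k)) ∂P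
          = alim := by
  have hC : 0 ≤ C := le_trans (sq_nonneg (a 0 - alim)) (by simpa using hbias 0)
  set q : ℝ := (2:ℝ) ^ (-(β/2)) with hq_def
  have hq0 : 0 < q := Real.rpow_pos_of_pos two_pos _
  have hq1 : q < 1 := Real.rpow_lt_one_of_one_lt_of_neg one_lt_two (by linarith)
  have hqpow : ∀ l : ℕ, q ^ l = (2:ℝ) ^ (-(β/2) * l) := by
    intro l
    rw [hq_def, ← Real.rpow_natCast ((2:ℝ) ^ (-(β/2))) l, ← Real.rpow_mul (by norm_num)]
  have hsum1 : ∑' l : ℕ, (1-q) * q ^ l = 1 := by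
    rw [tsum_mul_left, tsum_geometric_of_lt_one hq0.le hq1,
      mul_inv_cancel₀ (by linarith)]
  have htail : ∀ l : ℕ, ∑' k : ℕ, (1-q) * q ^ (l + k) = q ^ l := by
    intro l
    have he : ∀ k : ℕ, (1-q) * q ^ (l + k) = ((1-q) * q ^ l) * q ^ k := by
      intro k; rw [pow_add]; ring
    simp_rw [he]
    rw [tsum_mul_left, tsum_geometric_of_lt_one hq0.le hq1,
      mul_comm (1-q) (q ^ l), mul_assoc, mul_inv_cancel₀ (by linarith), mul_one]
  have hsqrt : ∀ l : ℕ, Real.sqrt (C * (2:ℝ) ^ (-(2 * β * l)))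
      = Real.sqrt C * (q ^ l) ^ 2 := by
    intro l
    rw [Real.sqrt_mul hC]
    congr 1
    have h1 : (2:ℝ) ^ (-(2 * β * (l:ℝ))) = ((2:ℝ) ^ (-(β * l))) ^ (2:ℕ) := by
      rw [← Real.rpow_natCast ((2:ℝ) ^ (-(β * (l:ℝ)))) 2, ← Real.rpow_mul (by norm_num)]
      ring_nf
    rw [h1, Real.sqrt_sq (by positivity)]
    rw [hqpow, ← Real.rpow_natCast ((2:ℝ) ^ (-(β/2) * l)) 2, ← Real.rpow_mul (by norm_num)]
    congr 1
    ring
  have hξ2bound : ∀ l, eLpNorm (ξ l) 2 P ≤ ENNReal.ofReal (Real.sqrt C * (q ^ l) ^ 2) := by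
    intro l
    have := aux_eLpNorm_two_le P (ξ l) (hξ2 l) _ (hmom l)
    rwa [hsqrt l] at this
  have habs : ∀ l : ℕ, |a l - alim| ≤ Real.sqrt C * (q ^ l) ^ 2 := by
    intro l
    have := Real.abs_le_sqrt (hbias l)
    rwa [hsqrt l] at this
  refine ⟨fun l => (1-q) * q ^ l, fun l => mul_pos (by linarith) (pow_pos hq0 l), hsum1, ?_⟩
  intro L hL hlaw hindep
  simp only [htail]
  set h : ℕ → Ω → ℝ := fun l => (L ⁻¹' Set.Ici l).indicator (fun ω => ξ l ω / q ^ l)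
    with hh_def
  have hhmeas : ∀ l, Measurable (h l) :=
    fun l => ((hξmeas l).div_const _).indicator (hL measurableSet_Ici)
  obtain ⟨hhbound, htsum_ne⟩ := aux_h_bounds P ξ L q C hq0 hq1 h hh_def hhmeas hξ2bound
  obtain ⟨hmem, hZrepr⟩ := aux_memLp P ξ L q C hq0 hq1 h hh_def hhmeas hhbound
  refine ⟨hmem, ?_⟩
  have hPA := aux_measure_Ici P L hL q hq0 hq1 hlaw
  have hint_h := aux_integral_indicator P ξ hξmeas L hL q hq0 hindep hPA
  have hfeq : (fun ω => ∑ l ∈ Finset.range (L ω + 1), ξ l ω / q ^ l)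
      = fun ω => ∑' l, h l ω := funext hZrepr
  calc ∫ ω, (∑ l ∈ Finset.range (L ω + 1), ξ l ω / q ^ l) ∂P
      = ∫ ω, ∑' l, h l ω ∂P := by rw [hfeq]
    _ = ∑' l, ∫ ω, h l ω ∂P :=
        integral_tsum (fun l => (hhmeas l).aestronglyMeasurable) htsum_ne
    _ = ∑' l, ∫ ω, ξ l ω ∂P := tsum_congr fun l => by
        simp only [hh_def]
        exact hint_h l
    _ = alim :=
        aux_tsum_eq q C hq0 hq1 (fun l => ∫ ω, ξ l ω ∂P) a alim ha0 hainc halim habs
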